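/- arXiv:2103.08243 — 7 statements merged into one kernel-verified Lean document; each statement's English description precedes it below -/
import Mathlib

section
/- A permutation class C is well-quasi-ordered under the containment order if and only if C has at most countably many subclasses. -/
/-- `σ` is contained (as a pattern) in `π`. -/
def PermContains {k n : ℕ} (σ : Equiv.Perm (Fin k)) (π : Equiv.Perm (Fin n)) : Prop :=
  ∃ f : Fin k → Fin n, StrictMono f ∧ ∀ i j : Fin k, σ i < σ j ↔ π (f i) < π (f j)

/-- A permutation of arbitrary length. -/
abbrev Permutation := Σ n : ℕ, Equiv.Perm (Fin n)

/-- The containment quasi-order on permutations. -/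
def PermLE (σ π : Permutation) : Prop := PermContains σ.2 π.2

/-- Strict containment. -/
def PermLT (σ π : Permutation) : Prop := PermLE σ π ∧ ¬ PermLE π σ

/-- A permutation class: a set of permutations closed downward under containment. -/
def IsPermClass (C : Set Permutation) : Prop :=
  ∀ σ π : Permutation, PermLE σ π → π ∈ C → σ ∈ C

/-- `β` is a basis element of the class `C`: a minimal permutation not in `C`. -/
def IsBasisElt (C : Set Permutation) (β : Permutation) : Prop :=
  β ∉ C ∧ ∀ σ : Permutation, PermLT σ β → σ ∈ C

lemma permLE_refl (π : Permutation) : PermLE π π :=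
  ⟨id, strictMono_id, fun _ _ => Iff.rfl⟩

lemma permLE_trans {a b c : Permutation} (h1 : PermLE a b) (h2 : PermLE b c) : PermLE a c := by
  obtain ⟨f, hf, hfo⟩ := h1
  obtain ⟨g, hg, hgo⟩ := h2
  exact ⟨g ∘ f, hg.comp hf, fun i j => (hfo i j).trans (hgo (f i) (f j))⟩

lemma permLE_len {a b : Permutation} (h : PermLE a b) : a.1 ≤ b.1 := by
  obtain ⟨f, hf, -⟩ := h
  simpa using Fintype.card_le_of_injective f hf.injective

lemma strictMono_fin_id {n : ℕ} {f : Fin n → Fin n} (hf : StrictMono f) : ∀ i, f i = i := by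
  intro i
  haveI : WellFoundedLT (Fin n) := Finite.to_wellFoundedLT
  have hbij : Function.Bijective f :=
    (Finite.injective_iff_bijective).mp hf.injective
  let e := Equiv.ofBijective f hbij
  have hsymm : StrictMono e.symm := by
    intro a b hab
    rcases lt_trichotomy (e.symm a) (e.symm b) with h | h | h
    · exact h
    · exact absurd (congrArg e h) (by simpa [e] using hab.ne)
    · have := hf h
      simp only [e, Equiv.ofBijective_symm_apply_apply] at this
      have ha : e (e.symm a) = a := e.apply_symm_apply a
      have hb : e (e.symm b) = b := e.apply_symm_apply b
      simp only [e, Equiv.ofBijective_apply] at ha hb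
      rw [ha, hb] at this
      exact absurd hab (not_lt.mpr this.le)
  have h1 : i ≤ f i := @StrictMono.le_apply (Fin n) _ _ _ hf i
  have h2 : f i ≤ e.symm (f i) := @StrictMono.le_apply (Fin n) _ _ _ hsymm (f i)
  have h3 : e.symm (f i) = i := e.symm_apply_apply i
  rw [h3] at h2
  exact le_antisymm h2 h1

lemma permLE_antisymm {a b : Permutation} (h1 : PermLE a b) (h2 : PermLE b a) : a = b := by
  obtain ⟨n, σ⟩ := a
  obtain ⟨m, π⟩ := b
  have hnm : n = m := le_antisymm (permLE_len h1) (permLE_len h2)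
  subst hnm
  obtain ⟨f, hf, hfo⟩ := h1
  have hfid := strictMono_fin_id hf
  simp only [hfid] at hfo
  -- hfo : ∀ i j, σ i < σ j ↔ π i < π j
  have key : StrictMono (σ ∘ π.symm) := by
    intro a b hab
    have : π (π.symm a) < π (π.symm b) := by simpa using hab
    exact (hfo _ _).mpr this
  have : ∀ i, σ (π.symm i) = i := strictMono_fin_id key
  have hσπ : σ = π := by
    ext i
    have h := this (π i)
    rw [Equiv.symm_apply_apply] at h
    exact congrArg Fin.val h
  simp [hσπ]

lemma permLT_len {a b : Permutation} (h : PermLT a b) : a.1 < b.1 := by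
  rcases lt_or_eq_of_le (permLE_len h.1) with hlt | heq
  · exact hlt
  · exfalso
    obtain ⟨n, σ⟩ := a
    obtain ⟨m, π⟩ := b
    dsimp at heq; subst heq
    obtain ⟨h1, h2⟩ := h
    obtain ⟨f, hf, hfo⟩ := h1
    have hfid := strictMono_fin_id hf
    simp only [hfid] at hfo
    exact h2 ⟨id, strictMono_id, fun i j => ((hfo i j).symm)⟩

example : Countable Permutation := inferInstance

/-- Minimal elements of `C \ D`. -/
def MinSet (C D : Set Permutation) : Set Permutation :=
  {β | β ∈ C ∧ β ∉ D ∧ ∀ σ, σ ∈ C → σ ∉ D → ¬ PermLT σ β}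

lemma minset_reach (C D : Set Permutation) :
    ∀ π : Permutation, π ∈ C → π ∉ D → ∃ β ∈ MinSet C D, PermLE β π := by
  have key : ∀ N : ℕ, ∀ π : Permutation, π.1 < N → π ∈ C → π ∉ D →
      ∃ β ∈ MinSet C D, PermLE β π := by
    intro N
    induction N with
    | zero => intro π h; omega
    | succ N ih =>
      intro π hπN hπC hπD
      by_cases hb : ∀ σ, σ ∈ C → σ ∉ D → ¬ PermLT σ π
      · exact ⟨π, ⟨hπC, hπD, hb⟩, permLE_refl π⟩
      · push_neg at hb
        obtain ⟨σ, hσC, hσD, hσπ⟩ := hb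
        have hlen := permLT_len hσπ
        obtain ⟨β, hβ, hle⟩ := ih σ (by omega) hσC hσD
        exact ⟨β, hβ, permLE_trans hle hσπ.1⟩
  intro π hπC hπD
  exact key (π.1 + 1) π (by omega) hπC hπD

lemma minset_eq (C D : Set Permutation) (hD : D ⊆ C) (hDc : IsPermClass D) :
    D = {π | π ∈ C ∧ ∀ β ∈ MinSet C D, ¬ PermLE β π} := by
  ext π
  constructor
  · intro hπ
    refine ⟨hD hπ, fun β hβ hle => hβ.2.1 (hDc β π hle hπ)⟩
  · rintro ⟨hπC, hπ⟩
    by_contra hπD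
    obtain ⟨β, hβ, hle⟩ := minset_reach C D π hπC hπD
    exact hπ β hβ hle

lemma minset_finite (C D : Set Permutation)
    (hwqo : ∀ f : ℕ → Permutation, (∀ n, f n ∈ C) →
        ∃ i j : ℕ, i < j ∧ PermLE (f i) (f j)) :
    (MinSet C D).Finite := by
  by_contra hinf
  rw [← Set.not_infinite, not_not] at hinf
  let e := hinf.natEmbedding
  obtain ⟨i, j, hij, hle⟩ := hwqo (fun n => (e n).1) (fun n => (e n).2.1)
  have hne : (e i).1 ≠ (e j).1 := fun h => absurd (Subtype.ext h ▸ rfl : e i = e j)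
    (by intro h'; exact absurd (e.injective h') (by omega))
  have hmin := (e j).2.2.2 (e i).1 (e i).2.1 (e i).2.2.1
  rw [PermLT, not_and_or, not_not] at hmin
  rcases hmin with h | h
  · exact h hle
  · exact hne (permLE_antisymm hle h)

lemma fwd (C : Set Permutation)
    (hwqo : ∀ f : ℕ → Permutation, (∀ n, f n ∈ C) →
        ∃ i j : ℕ, i < j ∧ PermLE (f i) (f j)) :
    {D : Set Permutation | D ⊆ C ∧ IsPermClass D}.Countable := by
  apply Set.countable_of_injective_of_countable_image
    (f := fun D => MinSet C D)
  · rintro D₁ ⟨hD₁, hDc₁⟩ D₂ ⟨hD₂, hDc₂⟩ h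
    dsimp at h
    rw [minset_eq C D₁ hD₁ hDc₁, minset_eq C D₂ hD₂ hDc₂, h]
  · apply Set.Countable.mono _ Set.Countable.setOf_finite
    rintro s ⟨D, hD, rfl⟩
    exact minset_finite C D hwqo

lemma no_strictAnti (L : ℕ → ℕ) (hL : ∀ k, L (k + 1) < L k) : False := by
  have key : ∀ k, L k + k ≤ L 0 := by
    intro k
    induction k with
    | zero => omega
    | succ k ih => have := hL k; omega
  have := key (L 0 + 1)
  omega

lemma bwd (C : Set Permutation) (hC : IsPermClass C)
    (hcount : {D : Set Permutation | D ⊆ C ∧ IsPermClass D}.Countable) :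
    ∀ f : ℕ → Permutation, (∀ n, f n ∈ C) →
        ∃ i j : ℕ, i < j ∧ PermLE (f i) (f j) := by
  intro f hf
  by_contra hbad
  push_neg at hbad
  -- hbad : ∀ i j, i < j → ¬ PermLE (f i) (f j)
  set p : ℕ → Prop := fun n => ∀ m, n < m → ¬ PermLE (f m) (f n) with hp
  -- p holds infinitely often
  have hinf : (setOf p).Infinite := by
    by_contra hfin
    rw [Set.not_infinite] at hfin
    obtain ⟨N, hN⟩ := hfin.bddAbove
    have hstep : ∀ n, N < n → ∃ m, n < m ∧ PermLE (f m) (f n) ∧ N < m := by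
      intro n hn
      have h2 : ∃ m, n < m ∧ PermLE (f m) (f n) := by
        by_contra hc
        push_neg at hc
        have : p n := fun m hm => hc m hm
        exact absurd (hN this) (by omega)
      obtain ⟨m, hm, hle⟩ := h2
      exact ⟨m, hm, hle, by omega⟩
    choose g hg1 hg2 hg3 using hstep
    let seq : ℕ → {n // N < n} := fun k => Nat.rec ⟨N + 1, by omega⟩
      (fun _ prev => ⟨g prev.1 prev.2, hg3 prev.1 prev.2⟩) k
    have hdec : ∀ k, (f (seq (k + 1)).1).1 < (f (seq k).1).1 := by
      intro k
      have h1 : (seq (k+1)).1 = g (seq k).1 (seq k).2 := rfl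
      have hle : PermLE (f (seq (k+1)).1) (f (seq k).1) := h1 ▸ hg2 _ _
      have hlt : (seq k).1 < (seq (k+1)).1 := h1 ▸ hg1 _ _
      exact permLT_len ⟨hle, hbad _ _ hlt⟩
    exact no_strictAnti (fun k => (f (seq k).1).1) hdec
  -- the antichain
  set a : ℕ → Permutation := fun k => f (Nat.nth p k) with ha
  have hanti : ∀ k l, k < l → ¬ PermLE (a k) (a l) ∧ ¬ PermLE (a l) (a k) := by
    intro k l hkl
    have hmono := Nat.nth_strictMono hinf hkl
    constructor
    · exact hbad _ _ hmono
    · exact Nat.nth_mem_of_infinite hinf k _ hmono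
  -- subclasses from subsets of ℕ
  set Dcl : Set ℕ → Set Permutation := fun S =>
    {π | π ∈ C ∧ ∃ k ∈ S, PermLE π (a k)} with hDcl
  have hmem : ∀ S : Set ℕ, Dcl S ∈ {D : Set Permutation | D ⊆ C ∧ IsPermClass D} := by
    intro S
    refine ⟨fun π hπ => hπ.1, fun σ π hσπ hπ => ⟨hC σ π hσπ hπ.1, ?_⟩⟩
    obtain ⟨k, hk, hle⟩ := hπ.2
    exact ⟨k, hk, permLE_trans hσπ hle⟩
  have hkey : ∀ (S : Set ℕ) (k : ℕ), a k ∈ Dcl S ↔ k ∈ S := by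
    intro S k
    constructor
    · rintro ⟨-, l, hl, hle⟩
      rcases lt_trichotomy k l with h | h | h
      · exact absurd hle (hanti k l h).1
      · exact h ▸ hl
      · exact absurd hle (hanti l k h).2
    · intro hk
      exact ⟨hf _, k, hk, permLE_refl _⟩
  have hinj : Function.Injective Dcl := by
    intro S T h
    ext k
    rw [← hkey S k, h, hkey T k]
  -- contradiction with countability
  have : Countable (Set ℕ) := by
    haveI := hcount.to_subtype
    exact Function.Injective.countable
      (f := fun S : Set ℕ => (⟨Dcl S, hmem S⟩ : ↥{D : Set Permutation | D ⊆ C ∧ IsPermClass D}))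
      (fun S T h => hinj (congrArg Subtype.val h))
  obtain ⟨g, hg⟩ := countable_iff_exists_injective (Set ℕ) |>.mp this
  exact Function.cantor_injective g hg

/-- A permutation class is wqo iff it has at most countably many subclasses. -/
theorem stmt_8 (C : Set Permutation) (hC : IsPermClass C) :
    (∀ f : ℕ → Permutation, (∀ n, f n ∈ C) →
        ∃ i j : ℕ, i < j ∧ PermLE (f i) (f j)) ↔
      {D : Set Permutation | D ⊆ C ∧ IsPermClass D}.Countable := by
  exact ⟨fwd C, bwd C hC⟩
end

section
/- For all k ≥ 5, the cycle C_k is not an induced subgraph of any inversion graph of a permutation. -/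
/-- The inversion graph of a permutation: `i ~ j` iff they form an inversion. -/
def invGraph {n : ℕ} (π : Equiv.Perm (Fin n)) : SimpleGraph (Fin n) :=
  SimpleGraph.fromRel (fun i j => i < j ∧ π j < π i)

/-- The chordless cycle on `k` vertices. -/
def cycleG (k : ℕ) : SimpleGraph (ZMod k) :=
  SimpleGraph.fromRel (fun i j => i = j + 1)

lemma cycle_aux (k : ℕ) (hk : 5 ≤ k) {α : Type*} [LinearOrder α] (x y : ZMod k → α)
    (hxinj : Function.Injective x) (hyinj : Function.Injective y)
    (hinv : ∀ a b : ZMod k, (cycleG k).Adj a b → x a < x b → y b < y a)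
    (hal : ∀ a b : ZMod k, a ≠ b → ¬(cycleG k).Adj a b → x a < x b → y a < y b) :
    False := by
  haveI : NeZero k := ⟨by omega⟩
  -- basic ZMod facts
  have hne : ∀ c : ℕ, 0 < c → c < k → ∀ a b : ZMod k, a - b = (c : ZMod k) → a ≠ b := by
    intro c hc1 hc2 a b hab h
    rw [h, sub_self] at hab
    have h0 : (c : ZMod k) = 0 := hab.symm
    rw [ZMod.natCast_eq_zero_iff] at h0
    exact absurd (Nat.le_of_dvd hc1 h0) (by omega)
  have adj_iff : ∀ a b : ZMod k, (cycleG k).Adj a b ↔ a ≠ b ∧ (a = b + 1 ∨ b = a + 1) := by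
    intro a b
    simp [cycleG, SimpleGraph.fromRel_adj]
  have nadj : ∀ a b : ZMod k, a ≠ b + 1 → b ≠ a + 1 → ¬(cycleG k).Adj a b := by
    intro a b h1 h2 h
    rw [adj_iff] at h
    tauto
  have adjc : ∀ a b : ZMod k, b = a + 1 → a ≠ b → (cycleG k).Adj a b := by
    intro a b h h'
    rw [adj_iff]; exact ⟨h', Or.inr h⟩
  have adjc' : ∀ a b : ZMod k, a = b + 1 → a ≠ b → (cycleG k).Adj a b := by
    intro a b h h'
    rw [adj_iff]; exact ⟨h', Or.inl h⟩
  -- handy ne's (all of the form bigger - smaller = c, 1 ≤ c ≤ 4)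
  have ne1 : ∀ a : ZMod k, a + 1 ≠ a := fun a =>
    hne 1 (by omega) (by omega) _ _ (by push_cast; ring)
  have ne2 : ∀ a : ZMod k, a + 2 ≠ a := fun a =>
    hne 2 (by omega) (by omega) _ _ (by push_cast; ring)
  have ne3 : ∀ a : ZMod k, a + 3 ≠ a := fun a =>
    hne 3 (by omega) (by omega) _ _ (by push_cast; ring)
  have ne4 : ∀ a : ZMod k, a + 4 ≠ a := fun a =>
    hne 4 (by omega) (by omega) _ _ (by push_cast; ring)
  -- contrapositive helpers
  have ltx : ∀ a b : ZMod k, a ≠ b → ¬ x a < x b → x b < x a := by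
    intro a b h h'
    rcases lt_or_gt_of_ne (fun hh => h (hxinj hh)) with h2 | h2
    · exact absurd h2 h'
    · exact h2
  -- minima
  obtain ⟨i, -, hi⟩ := Finset.exists_min_image (Finset.univ : Finset (ZMod k)) x
    ⟨0, Finset.mem_univ 0⟩
  obtain ⟨j, -, hj⟩ := Finset.exists_min_image (Finset.univ : Finset (ZMod k)) y
    ⟨0, Finset.mem_univ 0⟩
  have hxmin : ∀ m : ZMod k, m ≠ i → x i < x m := fun m hm =>
    lt_of_le_of_ne (hi m (Finset.mem_univ m)) (fun h => hm (hxinj h).symm)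
  -- neighbors of i have smaller y
  have hadj_ip : (cycleG k).Adj i (i + 1) := adjc i (i + 1) rfl (ne1 i).symm
  have him : i ≠ i - 1 := by
    intro h; exact ne1 (i - 1) (by linear_combination h)
  have hadj_im : (cycleG k).Adj i (i - 1) := adjc' i (i - 1) (by ring) him
  have hy1 : y (i + 1) < y i := hinv i (i + 1) hadj_ip (hxmin (i + 1) (ne1 i))
  have hy2 : y (i - 1) < y i := hinv i (i - 1) hadj_im (hxmin (i - 1) (Ne.symm him))
  -- j is a neighbor of i
  have hji : j ≠ i := by
    intro h
    exact absurd (hj (i + 1) (Finset.mem_univ _)) (by rw [h]; exact not_le.mpr hy1)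
  have hjcase : j = i + 1 ∨ j = i - 1 := by
    by_contra hcon
    push_neg at hcon
    have hnadj : ¬(cycleG k).Adj i j := by
      apply nadj
      · intro h; exact hcon.2 (by linear_combination -h)
      · exact hcon.1
    have := hal i j (Ne.symm hji) hnadj (hxmin j hji)
    exact absurd (hj (i + 1) (Finset.mem_univ _)) (not_le.mpr (lt_trans hy1 this))
  rcases hjcase with hj1 | hj1
  · -- j = i + 1 : bottom-most is i+1
    subst hj1
    -- x (i+2) < x (i+1)
    have n12 : (i + 1 : ZMod k) ≠ i + 2 := by
      intro h; exact ne1 (i + 1) (by linear_combination -h)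
    have hadj12 : (cycleG k).Adj (i + 1) (i + 2) := adjc (i + 1) (i + 2) (by ring) n12
    have hx1 : x (i + 2) < x (i + 1) := by
      apply ltx (i + 1) (i + 2) n12
      intro h
      exact absurd (hinv (i + 1) (i + 2) hadj12 h)
        (not_lt.mpr (hj (i + 2) (Finset.mem_univ _)))
    -- y i < y (i + 2)
    have ni2 : i ≠ i + 2 := (ne2 i).symm
    have hy3 : y i < y (i + 2) := by
      apply hal i (i + 2) ni2
      · apply nadj
        · intro h; exact ne3 i (by linear_combination -h)
        · intro h; exact ne1 (i + 1) (by linear_combination h)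
      · exact hxmin (i + 2) (ne2 i)
    -- x (i-1) < x (i+2)
    have nm2 : (i + 2 : ZMod k) ≠ i - 1 := by
      intro h; exact ne3 (i - 1) (by linear_combination h)
    have hnadjm2 : ¬(cycleG k).Adj (i + 2) (i - 1) := by
      apply nadj
      · intro h; exact ne2 i (by linear_combination h)
      · intro h; exact ne4 (i - 1) (by linear_combination -h)
    have hx2 : x (i - 1) < x (i + 2) := by
      apply ltx (i + 2) (i - 1) nm2
      intro h
      have := hal (i + 2) (i - 1) nm2 hnadjm2 h
      exact absurd (lt_trans hy2 hy3) (not_lt.mpr (le_of_lt this))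
    -- x (i+1) < x (i-1)
    have npm : (i - 1 : ZMod k) ≠ i + 1 := by
      intro h; exact ne2 (i - 1) (by linear_combination -h)
    have hnadjpm : ¬(cycleG k).Adj (i - 1) (i + 1) := by
      apply nadj
      · intro h; exact ne3 (i - 1) (by linear_combination -h)
      · intro h; exact ne1 i (by linear_combination h)
    have hx3 : x (i + 1) < x (i - 1) := by
      apply ltx (i - 1) (i + 1) npm
      intro h
      have := hal (i - 1) (i + 1) npm hnadjpm h
      exact absurd this (not_lt.mpr (hj (i - 1) (Finset.mem_univ _)))
    exact absurd (lt_trans (lt_trans hx3 hx2) hx1) (lt_irrefl _)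
  · -- j = i - 1 : bottom-most is i-1
    subst hj1
    -- x (i-2) < x (i-1)
    have n12' : (i - 2 : ZMod k) ≠ i - 1 := by
      intro h; exact ne1 (i - 2) (by linear_combination -h)
    have hadj12' : (cycleG k).Adj (i - 2) (i - 1) := adjc (i - 2) (i - 1) (by ring) n12'
    have hx1 : x (i - 2) < x (i - 1) := by
      apply ltx (i - 1) (i - 2) (Ne.symm n12')
      intro hlt
      exact absurd (hinv (i - 1) (i - 2) hadj12'.symm hlt)
        (not_lt.mpr (hj (i - 2) (Finset.mem_univ _)))
    -- y i < y (i-2)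
    have nim2 : i ≠ i - 2 := by
      intro h; exact ne2 (i - 2) (by linear_combination h)
    have hy3 : y i < y (i - 2) := by
      apply hal i (i - 2) nim2
      · apply nadj
        · intro h; exact ne1 (i - 1) (by linear_combination h)
        · intro h; exact ne3 (i - 2) (by linear_combination -h)
      · exact hxmin (i - 2) (Ne.symm nim2)
    -- x (i-1) < x (i+1)
    have npm' : (i + 1 : ZMod k) ≠ i - 1 := by
      intro h; exact ne2 (i - 1) (by linear_combination h)
    have hnadjpm' : ¬(cycleG k).Adj (i + 1) (i - 1) := by
      apply nadj
      · intro h; exact ne1 i (by linear_combination h)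
      · intro h; exact ne3 (i - 1) (by linear_combination -h)
    have hx2 : x (i - 1) < x (i + 1) := by
      apply ltx (i + 1) (i - 1) npm'
      intro h
      have := hal (i + 1) (i - 1) npm' hnadjpm' h
      exact absurd this (not_lt.mpr (hj (i + 1) (Finset.mem_univ _)))
    -- x (i+1) < x (i-2)
    have np2' : (i - 2 : ZMod k) ≠ i + 1 := by
      intro h; exact ne3 (i - 2) (by linear_combination -h)
    have hnadjp2 : ¬(cycleG k).Adj (i - 2) (i + 1) := by
      apply nadj
      · intro h; exact ne4 (i - 2) (by linear_combination -h)
      · intro h; exact ne2 (i - 1) (by linear_combination h)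
    have hx3 : x (i + 1) < x (i - 2) := by
      apply ltx (i - 2) (i + 1) np2'
      intro h
      have := hal (i - 2) (i + 1) np2' hnadjp2 h
      exact absurd (lt_trans hy1 hy3) (not_lt.mpr (le_of_lt this))
    exact absurd (lt_trans (lt_trans hx2 hx3) hx1) (lt_irrefl _)

/-- For `k ≥ 5`, the cycle `C_k` is not an induced subgraph of any
inversion graph. -/
theorem stmt_10 (k : ℕ) (hk : 5 ≤ k) {n : ℕ} (π : Equiv.Perm (Fin n)) :
    IsEmpty (cycleG k ↪g invGraph π) := by
  constructor
  intro e
  apply cycle_aux k hk (fun m => (e m : Fin n)) (fun m => π (e m))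
  · exact fun a b h => e.injective h
  · exact fun a b h => e.injective (π.injective h)
  · intro a b hadj hx
    have h2 := e.map_adj_iff.mpr hadj
    simp only [invGraph, SimpleGraph.fromRel_adj] at h2
    rcases h2.2 with ⟨-, h⟩ | ⟨h', -⟩
    · exact h
    · exact absurd hx (asymm h')
  · intro a b hab hnadj hx
    rcases lt_trichotomy (π (e a)) (π (e b)) with h | h | h
    · exact h
    · exact absurd (e.injective (π.injective h)) hab
    · exfalso
      apply hnadj
      rw [← e.map_adj_iff]
      simp only [invGraph, SimpleGraph.fromRel_adj]
      exact ⟨fun hh => hab (e.injective hh), Or.inl ⟨hx, h⟩⟩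
end

section
/- Every 2-wqo permutation class is finitely based: if the set of permutations of C labeled by a two-element antichain is well-quasi-ordered under labeled containment, then the basis of C is finite. -/
/-- An `L`-labeled permutation: a permutation with a labeling of its positions. -/
abbrev LPermutation (L : Type) := Σ n : ℕ, Equiv.Perm (Fin n) × (Fin n → L)

/-- Labeled containment of labeled permutations, relative to the label
quasi-order `rL`. -/
def LPermLE {L : Type} (rL : L → L → Prop) (a b : LPermutation L) : Prop :=
  ∃ f : Fin a.1 → Fin b.1, StrictMono f ∧
    (∀ i j : Fin a.1, a.2.1 i < a.2.1 j ↔ b.2.1 (f i) < b.2.1 (f j)) ∧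
    ∀ i : Fin a.1, rL (a.2.2 i) (b.2.2 (f i))

/- ### Auxiliary machinery -/

/-- The position of the maximal value of `π`. -/
def maxPos {m : ℕ} (π : Equiv.Perm (Fin (m+1))) : Fin (m+1) := π.symm (Fin.last m)

lemma ne_last_of_ne_maxPos {m : ℕ} (π : Equiv.Perm (Fin (m+1))) {x : Fin (m+1)}
    (hx : x ≠ maxPos π) : π x ≠ Fin.last m := by
  intro h
  exact hx (by simpa [maxPos, ← h] using (π.symm_apply_apply x).symm)

/-- Deleting the maximal entry from a permutation. -/
noncomputable def delMax {m : ℕ} (π : Equiv.Perm (Fin (m+1))) : Equiv.Perm (Fin m) :=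
  Equiv.ofBijective
    (fun i => (π ((maxPos π).succAbove i)).castPred
      (ne_last_of_ne_maxPos π (Fin.succAbove_ne _ i)))
    (Finite.injective_iff_bijective.mp (by
      intro i j hij
      have h2 : π ((maxPos π).succAbove i) = π ((maxPos π).succAbove j) := by
        have := congrArg Fin.castSucc hij
        simpa [Fin.castSucc_castPred] using this
      exact Fin.succAbove_right_injective (π.injective h2)))

lemma delMax_castSucc {m : ℕ} (π : Equiv.Perm (Fin (m+1))) (i : Fin m) :
    Fin.castSucc (delMax π i) = π ((maxPos π).succAbove i) := by
  simp [delMax, Equiv.ofBijective, Fin.castSucc_castPred]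

lemma delMax_lt_iff {m : ℕ} (π : Equiv.Perm (Fin (m+1))) (i j : Fin m) :
    delMax π i < delMax π j ↔ π ((maxPos π).succAbove i) < π ((maxPos π).succAbove j) := by
  rw [← delMax_castSucc, ← delMax_castSucc, Fin.castSucc_lt_castSucc_iff]

lemma delMax_le {m : ℕ} (π : Equiv.Perm (Fin (m+1))) :
    PermLE ⟨m, delMax π⟩ ⟨m+1, π⟩ :=
  ⟨(maxPos π).succAbove, Fin.strictMono_succAbove _, fun i j => delMax_lt_iff π i j⟩

lemma no_strictMono_down {m : ℕ} (f : Fin (m+1) → Fin m) (hf : StrictMono f) : False := by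
  have := Fintype.card_le_of_injective f hf.injective
  simp at this

/-- The key combinatorial lemma: labeled containment of the deleted
permutations lifts to containment of the original permutations. -/
lemma lift_containment {m₁ m₂ : ℕ} (π₁ : Equiv.Perm (Fin (m₁+1))) (π₂ : Equiv.Perm (Fin (m₂+1)))
    (f : Fin m₁ → Fin m₂) (hf : StrictMono f)
    (hpat : ∀ i j : Fin m₁, delMax π₁ i < delMax π₁ j ↔ delMax π₂ (f i) < delMax π₂ (f j))
    (hlab : ∀ i : Fin m₁,
      (i.castSucc < maxPos π₁) = ((f i).castSucc < maxPos π₂)) :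
    PermLE ⟨m₁+1, π₁⟩ ⟨m₂+1, π₂⟩ := by
  classical
  set p₁ := maxPos π₁ with hp₁
  set p₂ := maxPos π₂ with hp₂
  -- define F
  have hinv : ∀ x : Fin (m₁+1), x ≠ p₁ → ∃ i : Fin m₁, p₁.succAbove i = x := by
    intro x hx
    exact Fin.exists_succAbove_eq hx
  let F : Fin (m₁+1) → Fin (m₂+1) := fun x =>
    if hx : x = p₁ then p₂ else p₂.succAbove (f (hx |> hinv x).choose)
  have hFp : F p₁ = p₂ := by simp [F]
  have hFs : ∀ i : Fin m₁, F (p₁.succAbove i) = p₂.succAbove (f i) := by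
    intro i
    have hne : p₁.succAbove i ≠ p₁ := Fin.succAbove_ne _ i
    simp only [F, dif_neg hne]
    congr 2
    exact Fin.succAbove_right_injective ((hinv _ hne).choose_spec)
  -- comparisons of succAbove with p
  have key1 : ∀ i : Fin m₁, p₁.succAbove i < p₁ ↔ i.castSucc < p₁ :=
    fun i => Fin.succAbove_lt_iff_castSucc_lt p₁ i
  have key2 : ∀ i : Fin m₂, p₂.succAbove i < p₂ ↔ i.castSucc < p₂ :=
    fun i => Fin.succAbove_lt_iff_castSucc_lt p₂ i
  have hcomp : ∀ i : Fin m₁, (p₁.succAbove i < p₁ ↔ p₂.succAbove (f i) < p₂) := by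
    intro i
    rw [key1, key2]
    have := hlab i
    constructor <;> intro h
    · exact by rw [← this]; exact h
    · exact by rw [this]; exact h
  have hcomp' : ∀ i : Fin m₁, (p₁ < p₁.succAbove i ↔ p₂ < p₂.succAbove (f i)) := by
    intro i
    have h1 := hcomp i
    have hne1 : p₁.succAbove i ≠ p₁ := Fin.succAbove_ne _ i
    have hne2 : p₂.succAbove (f i) ≠ p₂ := Fin.succAbove_ne _ (f i)
    constructor <;> intro h
    · rcases lt_trichotomy (p₂.succAbove (f i)) p₂ with h' | h' | h'
      · exact absurd (h1.mpr h') (lt_asymm h)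
      · exact absurd h' hne2
      · exact h'
    · rcases lt_trichotomy (p₁.succAbove i) p₁ with h' | h' | h'
      · exact absurd (h1.mp h') (lt_asymm h)
      · exact absurd h' hne1
      · exact h'
  -- F is strictly monotone
  have hFmono : StrictMono F := by
    intro x y hxy
    by_cases hx : x = p₁ <;> by_cases hy : y = p₁
    · subst hx; subst hy; exact absurd hxy (lt_irrefl _)
    · subst hx
      obtain ⟨j, rfl⟩ := hinv y hy
      rw [hFp, hFs]
      exact (hcomp' j).mp hxy
    · subst hy
      obtain ⟨i, rfl⟩ := hinv x hx
      rw [hFp, hFs]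
      exact (hcomp i).mp hxy
    · obtain ⟨i, rfl⟩ := hinv x hx
      obtain ⟨j, rfl⟩ := hinv y hy
      rw [hFs, hFs]
      rw [Fin.succAbove_lt_succAbove_iff] at hxy ⊢
      exact hf hxy
  -- pattern preservation
  refine ⟨F, hFmono, ?_⟩
  have hmax1 : π₁ p₁ = Fin.last m₁ := Equiv.apply_symm_apply _ _
  have hmax2 : π₂ p₂ = Fin.last m₂ := Equiv.apply_symm_apply _ _
  intro x y
  by_cases hx : x = p₁ <;> by_cases hy : y = p₁
  · subst hx; subst hy; simp
  · subst hx
    obtain ⟨j, rfl⟩ := hinv y hy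
    rw [hFp, hFs, hmax1, hmax2]
    have h1 : ¬ Fin.last m₁ < π₁ (p₁.succAbove j) :=
      not_lt.mpr (Fin.le_last _)
    have h2 : ¬ Fin.last m₂ < π₂ (p₂.succAbove (f j)) :=
      not_lt.mpr (Fin.le_last _)
    simp [h1, h2]
  · subst hy
    obtain ⟨i, rfl⟩ := hinv x hx
    rw [hFp, hFs, hmax1, hmax2]
    have h1 : π₁ (p₁.succAbove i) < Fin.last m₁ :=
      lt_of_le_of_ne (Fin.le_last _) (ne_last_of_ne_maxPos π₁ (Fin.succAbove_ne _ i))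
    have h2 : π₂ (p₂.succAbove (f i)) < Fin.last m₂ :=
      lt_of_le_of_ne (Fin.le_last _) (ne_last_of_ne_maxPos π₂ (Fin.succAbove_ne _ (f i)))
    simp [h1, h2]
  · obtain ⟨i, rfl⟩ := hinv x hx
    obtain ⟨j, rfl⟩ := hinv y hy
    rw [hFs, hFs, ← delMax_lt_iff, ← delMax_lt_iff]
    exact hpat i j

/-- Every 2-wqo permutation class is finitely based: if the members of `C`
labeled by a two-element antichain (here `Bool` with equality) are wqo under
labeled containment, then the basis of `C` is finite. -/
theorem stmt_14 (C : Set Permutation) (hC : IsPermClass C)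
    (h2 : ∀ f : ℕ → LPermutation Bool,
        (∀ k : ℕ, (⟨(f k).1, (f k).2.1⟩ : Permutation) ∈ C) →
        ∃ i j : ℕ, i < j ∧ LPermLE (· = ·) (f i) (f j)) :
    {β : Permutation | IsBasisElt C β}.Finite := by
  classical
  by_contra hinf
  replace hinf : {β : Permutation | IsBasisElt C β}.Infinite := hinf
  -- restrict to basis elements of positive length
  have hfin0 : {x : Permutation | x.1 = 0}.Finite := by
    have : {x : Permutation | x.1 = 0} ⊆ {⟨0, 1⟩} := by
      rintro ⟨n, π⟩ hx
      simp only [Set.mem_setOf_eq] at hx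
      subst hx
      simp only [Set.mem_singleton_iff]
      congr 1
      exact Subsingleton.elim _ _
    exact (Set.finite_singleton _).subset this
  have hsub : {β : Permutation | IsBasisElt C β} ⊆
      ({β : Permutation | IsBasisElt C β} ∩ {x | x.1 ≠ 0}) ∪ {x : Permutation | x.1 = 0} := by
    intro x hx
    by_cases h0 : x.1 = 0
    · exact Or.inr h0
    · exact Or.inl ⟨hx, h0⟩
  have hinf' : ({β : Permutation | IsBasisElt C β} ∩ {x | x.1 ≠ 0}).Infinite := by
    intro hfin
    exact hinf ((hfin.union hfin0).subset hsub)
  obtain e := hinf'.natEmbedding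
  -- each basis element has length m_k + 1
  have hlen : ∀ k : ℕ, ∃ m : ℕ, ((e k : Permutation)).1 = m + 1 := by
    intro k
    have h := (e k).2.2
    simp only [Set.mem_setOf_eq] at h
    exact ⟨(e k : Permutation).1 - 1, by omega⟩
  choose mfun hm using hlen
  -- the permutation of the k-th basis element, cast to length m_k + 1
  have hperm : ∀ k : ℕ, ∃ π : Equiv.Perm (Fin (mfun k + 1)),
      (e k : Permutation) = ⟨mfun k + 1, π⟩ := by
    intro k
    rcases hek : (e k : Permutation) with ⟨n, π⟩
    have hn : n = mfun k + 1 := by rw [← hm k, hek]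
    subst hn
    exact ⟨π, rfl⟩
  choose pfun hpfun using hperm
  -- build labeled sequence
  let g : ℕ → LPermutation Bool := fun k =>
    ⟨mfun k, (delMax (pfun k), fun i => decide (i.castSucc < maxPos (pfun k)))⟩
  have hbasis : ∀ k : ℕ, IsBasisElt C (e k : Permutation) := fun k => (e k).2.1
  have hgC : ∀ k : ℕ, (⟨(g k).1, (g k).2.1⟩ : Permutation) ∈ C := by
    intro k
    have hb := hbasis k
    rw [hpfun k] at hb
    apply hb.2
    constructor
    · exact delMax_le (pfun k)
    · rintro ⟨F, hF, -⟩
      exact no_strictMono_down F hF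
  obtain ⟨i, j, hij, F, hFmono, hFpat, hFlab⟩ := h2 g hgC
  -- lift to containment of basis elements
  have hle : PermLE (e i : Permutation) (e j : Permutation) := by
    rw [hpfun i, hpfun j]
    apply lift_containment (pfun i) (pfun j) F hFmono hFpat
    intro x
    have := hFlab x
    simp only [g, decide_eq_decide] at this
    simp [this]
  -- e i = e j contradicts injectivity
  have hne : (e i : Permutation) ≠ (e j : Permutation) := by
    intro h
    exact (Nat.ne_of_lt hij) (by
      have := e.injective (Subtype.ext h)
      exact this)
  rcases Classical.em (PermLE (e j : Permutation) (e i : Permutation)) with h | h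
  · exact hne (permLE_antisymm hle h)
  · -- strict containment: e i ∈ C, contradicting e i ∉ C
    have : (e i : Permutation) ∈ C := (hbasis j).2 _ ⟨hle, h⟩
    exact (hbasis i).1 this
end

section
/- If C is a finitely based permutation class whose longest basis element has length m, then the class C^{+1} of one-point extensions of C is finitely based, with no basis element of length greater than m(m+1). -/
/-- The class of one-point extensions of `C`. -/
def OnePtExt (C : Set Permutation) : Set Permutation :=
  {π | π ∈ C ∨ ∃ σ ∈ C, PermLE σ π ∧ σ.1 + 1 = π.1}

lemma strictMono_fin_self_eq_id {k : ℕ} {f : Fin k → Fin k} (hf : StrictMono f) : f = id := by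
  have h1 : f = Finset.univ.orderEmbOfFin (by simp) :=
    Finset.orderEmbOfFin_unique _ (fun x => Finset.mem_univ _) hf
  have h2 : (id : Fin k → Fin k) = Finset.univ.orderEmbOfFin (by simp) :=
    Finset.orderEmbOfFin_unique _ (fun x => Finset.mem_univ _) strictMono_id
  rw [h1, h2]

lemma eq_of_relOrder {k : ℕ} (σ τ : Equiv.Perm (Fin k))
    (h : ∀ i j, σ i < σ j ↔ τ i < τ j) : σ = τ := by
  have hsm : StrictMono (fun a => τ (σ.symm a)) := by
    intro a b hab
    exact (h (σ.symm a) (σ.symm b)).mp (by simpa using hab)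
  have hid := strictMono_fin_self_eq_id hsm
  ext i
  have h2 := congrFun hid (σ i)
  simp only [Function.comp_apply, Equiv.symm_apply_apply, id_eq] at h2
  exact congrArg Fin.val h2.symm

/-- The pattern of `π` on the set of positions `S`. -/
noncomputable def subPerm {n : ℕ} (π : Equiv.Perm (Fin n)) (S : Finset (Fin n)) :
    Equiv.Perm (Fin S.card) :=
  Equiv.ofBijective
    (fun i => ((S.image π).orderIsoOfFin (Finset.card_image_of_injective S π.injective)).symm
      ⟨π (S.orderEmbOfFin rfl i), Finset.mem_image_of_mem π (Finset.orderEmbOfFin_mem S rfl i)⟩)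
    (Finite.injective_iff_bijective.mp (fun i j hij => by
      have h1 := (((S.image π).orderIsoOfFin
        (Finset.card_image_of_injective S π.injective)).symm).injective hij
      have h2 : π (S.orderEmbOfFin rfl i) = π (S.orderEmbOfFin rfl j) :=
        congrArg Subtype.val h1
      exact (S.orderEmbOfFin rfl).injective (π.injective h2)))

lemma subPerm_lt_iff {n : ℕ} (π : Equiv.Perm (Fin n)) (S : Finset (Fin n)) (i j : Fin S.card) :
    subPerm π S i < subPerm π S j ↔ π (S.orderEmbOfFin rfl i) < π (S.orderEmbOfFin rfl j) := by
  simp only [subPerm, Equiv.ofBijective_apply]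
  rw [OrderIso.lt_iff_lt]
  exact Subtype.mk_lt_mk

lemma subPerm_le {n : ℕ} (π : Equiv.Perm (Fin n)) (S : Finset (Fin n)) :
    PermLE ⟨S.card, subPerm π S⟩ ⟨n, π⟩ :=
  ⟨S.orderEmbOfFin rfl, (S.orderEmbOfFin rfl).strictMono, fun i j => subPerm_lt_iff π S i j⟩

lemma orderEmbOfFin_symm_apply' {α : Type*} [LinearOrder α] (S : Finset α) {k : ℕ}
    (h : S.card = k) (x : S) : S.orderEmbOfFin h ((S.orderIsoOfFin h).symm x) = x := by
  rw [← Finset.coe_orderIsoOfFin_apply, OrderIso.apply_symm_apply]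

lemma subPerm_mono {n : ℕ} (π : Equiv.Perm (Fin n)) {T S : Finset (Fin n)} (hTS : T ⊆ S) :
    PermLE ⟨T.card, subPerm π T⟩ ⟨S.card, subPerm π S⟩ := by
  refine ⟨fun i => (S.orderIsoOfFin rfl).symm
    ⟨T.orderEmbOfFin rfl i, hTS (Finset.orderEmbOfFin_mem T rfl i)⟩, ?_, ?_⟩
  · intro i j hij
    exact ((S.orderIsoOfFin rfl).symm).lt_iff_lt.mpr
      (Subtype.mk_lt_mk.mpr ((T.orderEmbOfFin rfl).strictMono hij))
  · intro i j
    rw [subPerm_lt_iff, subPerm_lt_iff, orderEmbOfFin_symm_apply', orderEmbOfFin_symm_apply']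

lemma image_card {k n : ℕ} {f : Fin k → Fin n} (hf : StrictMono f) :
    (Finset.image f Finset.univ).card = k := by
  rw [Finset.card_image_of_injective _ hf.injective, Finset.card_univ, Fintype.card_fin]

lemma subPerm_image_mem_iff {C : Set Permutation} (hC : IsPermClass C) {k n : ℕ}
    {σ : Equiv.Perm (Fin k)} {π : Equiv.Perm (Fin n)} {f : Fin k → Fin n} (hf : StrictMono f)
    (hof : ∀ i j, σ i < σ j ↔ π (f i) < π (f j)) :
    ((⟨(Finset.image f Finset.univ).card, subPerm π (Finset.image f Finset.univ)⟩ :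
      Permutation) ∈ C) ↔ (⟨k, σ⟩ : Permutation) ∈ C := by
  set S := Finset.image f Finset.univ with hS
  have hcard : S.card = k := image_card hf
  have hfeq : f = S.orderEmbOfFin hcard :=
    Finset.orderEmbOfFin_unique hcard
      (fun x => Finset.mem_image_of_mem f (Finset.mem_univ x)) hf
  have hcast : ∀ i : Fin S.card, S.orderEmbOfFin rfl i = f (Fin.cast hcard i) := by
    intro i
    rw [hfeq]
    exact (Finset.orderEmbOfFin_eq_orderEmbOfFin_iff).mpr rfl
  have hcast' : ∀ i : Fin k, f i = S.orderEmbOfFin rfl (Fin.cast hcard.symm i) := by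
    intro i
    rw [hcast]; rfl
  have hcastMono : ∀ (a b : ℕ) (h : a = b), StrictMono (Fin.cast h) := by
    intro a b h i j hij
    rw [Fin.lt_def, Fin.coe_cast, Fin.coe_cast]
    exact hij
  constructor
  · intro h
    refine hC _ _ ?_ h
    exact ⟨Fin.cast hcard.symm, hcastMono _ _ _, fun i j => by
      rw [subPerm_lt_iff, ← hcast' i, ← hcast' j]; exact hof i j⟩
  · intro h
    refine hC _ _ ?_ h
    exact ⟨Fin.cast hcard, hcastMono _ _ _, fun i j => by
      rw [subPerm_lt_iff, hcast i, hcast j]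
      exact (hof _ _).symm⟩

lemma exists_basis_le {C : Set Permutation} (π : Permutation) (hπ : π ∉ C) :
    ∃ b, IsBasisElt C b ∧ PermLE b π := by
  suffices H : ∀ N (π : Permutation), π.1 < N → π ∉ C → ∃ b, IsBasisElt C b ∧ PermLE b π from
    H (π.1 + 1) π (Nat.lt_succ_self _) hπ
  intro N
  induction N with
  | zero => exact fun π h => absurd h (Nat.not_lt_zero _)
  | succ N ih =>
    intro π hlt hπ
    by_cases h : ∀ σ, PermLT σ π → σ ∈ C
    · exact ⟨π, ⟨hπ, h⟩, permLE_refl π⟩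
    · push_neg at h
      obtain ⟨σ, hσlt, hσ⟩ := h
      obtain ⟨b, hb, hble⟩ := ih σ (by have := permLT_len hσlt; omega) hσ
      exact ⟨b, hb, permLE_trans hble hσlt.1⟩

lemma finite_len_le (M : ℕ) : {π : Permutation | π.1 ≤ M}.Finite := by
  have hsub : {π : Permutation | π.1 ≤ M} ⊆ ⋃ n ∈ Set.Iic M, Sigma.mk n '' Set.univ := by
    rintro ⟨n, σ⟩ h
    simp only [Set.mem_iUnion]
    exact ⟨n, h, σ, trivial, rfl⟩
  exact Set.Finite.subset (Set.Finite.biUnion (Set.finite_Iic M)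
    (fun n _ => Set.finite_univ.image _)) hsub

lemma basis_len_le (C : Set Permutation) (hC : IsPermClass C) (m : ℕ)
    (hm : ∀ β : Permutation, IsBasisElt C β → β.1 ≤ m) :
    ∀ β : Permutation, IsBasisElt (OnePtExt C) β → β.1 ≤ m * (m + 1) := by
  rintro ⟨n, π⟩ ⟨hβ, hmin⟩
  by_contra hcon
  push_neg at hcon
  have hn : m * (m + 1) < n := hcon
  have hn1 : 1 ≤ n := lt_of_le_of_lt (Nat.zero_le _) hn
  have hβC : (⟨n, π⟩ : Permutation) ∉ C := fun h => hβ (Or.inl h)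
  have hβext : ¬ ∃ σ ∈ C, PermLE σ (⟨n, π⟩ : Permutation) ∧ σ.1 + 1 = n :=
    fun h => hβ (Or.inr h)
  -- one-point deletions
  have hDcard : ∀ y : Fin n, (({y}ᶜ : Finset (Fin n)).card) = n - 1 := by
    intro y; rw [Finset.card_compl, Finset.card_singleton, Fintype.card_fin]
  have hDle : ∀ y : Fin n, PermLE ⟨({y}ᶜ : Finset (Fin n)).card, subPerm π {y}ᶜ⟩ ⟨n, π⟩ :=
    fun y => subPerm_le π _
  have hDnotC : ∀ y : Fin n,
      (⟨({y}ᶜ : Finset (Fin n)).card, subPerm π {y}ᶜ⟩ : Permutation) ∉ C := by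
    intro y hy
    refine hβext ⟨_, hy, hDle y, ?_⟩
    show ({y}ᶜ : Finset (Fin n)).card + 1 = n
    rw [hDcard y]; omega
  have hDlt : ∀ y : Fin n,
      PermLT ⟨({y}ᶜ : Finset (Fin n)).card, subPerm π {y}ᶜ⟩ ⟨n, π⟩ := by
    intro y
    refine ⟨hDle y, fun hge => ?_⟩
    have h1 : n ≤ ({y}ᶜ : Finset (Fin n)).card := permLE_len hge
    rw [hDcard y] at h1
    omega
  -- for every point `y`, a set `T y` of positions avoiding `y`, of size `n - 2`,
  -- whose pattern lies in `C`
  have hT : ∀ y : Fin n, ∃ T : Finset (Fin n), y ∉ T ∧ T.card + 2 = n ∧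
      (⟨T.card, subPerm π T⟩ : Permutation) ∈ C := by
    intro y
    rcases hmin _ (hDlt y) with h | ⟨τ, hτC, hτle, hτcard⟩
    · exact absurd h (hDnotC y)
    · have hτcard' : τ.1 + 1 = ({y}ᶜ : Finset (Fin n)).card := hτcard
      rw [hDcard y] at hτcard'
      obtain ⟨f, hf, hof⟩ := hτle
      have hgmono : StrictMono
          (fun i => ({y}ᶜ : Finset (Fin n)).orderEmbOfFin rfl (f i)) :=
        (({y}ᶜ : Finset (Fin n)).orderEmbOfFin rfl).strictMono.comp hf
      have hgorder : ∀ i j, τ.2 i < τ.2 j ↔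
          π (({y}ᶜ : Finset (Fin n)).orderEmbOfFin rfl (f i)) <
          π (({y}ᶜ : Finset (Fin n)).orderEmbOfFin rfl (f j)) :=
        fun i j => (hof i j).trans (subPerm_lt_iff π _ _ _)
      refine ⟨Finset.image (fun i => ({y}ᶜ : Finset (Fin n)).orderEmbOfFin rfl (f i))
        Finset.univ, ?_, ?_, ?_⟩
      · intro hy
        obtain ⟨i, _, hi⟩ := Finset.mem_image.mp hy
        have hmem : ({y}ᶜ : Finset (Fin n)).orderEmbOfFin rfl (f i) ∈
            ({y}ᶜ : Finset (Fin n)) := Finset.orderEmbOfFin_mem _ _ _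
        rw [hi] at hmem
        simp at hmem
      · rw [image_card hgmono]; omega
      · rw [subPerm_image_mem_iff hC hgmono hgorder, Sigma.eta]
        exact hτC
  choose T hTy hTcard hTC using hT
  -- fact F: no "bad" set of positions is inside any `T y`
  have factF : ∀ (B : Finset (Fin n)),
      (⟨B.card, subPerm π B⟩ : Permutation) ∉ C → ∀ y, ¬ B ⊆ T y := by
    intro B hB y hsub
    exact hB (hC _ _ (subPerm_mono π hsub) (hTC y))
  -- the complement of `T y` is the pair `{y, z y}`
  have hcompl : ∀ y : Fin n, ∃ z, z ≠ y ∧ z ∉ T y ∧ ∀ u, u ∉ T y → u = y ∨ u = z := by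
    intro y
    have hcc : ((T y)ᶜ : Finset (Fin n)).card = 2 := by
      rw [Finset.card_compl, Fintype.card_fin]
      have := hTcard y; omega
    have hymem : y ∈ (T y)ᶜ := Finset.mem_compl.mpr (hTy y)
    have hne : ((T y)ᶜ.erase y).Nonempty := by
      rw [← Finset.card_pos, Finset.card_erase_of_mem hymem, hcc]
      norm_num
    obtain ⟨z, hz⟩ := hne
    have hzne : z ≠ y := Finset.ne_of_mem_erase hz
    have hznotT : z ∉ T y := Finset.mem_compl.mp (Finset.mem_of_mem_erase hz)
    refine ⟨z, hzne, hznotT, ?_⟩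
    intro u hu
    have hsub : ({y, z} : Finset (Fin n)) ⊆ (T y)ᶜ := by
      intro v hv
      rcases Finset.mem_insert.mp hv with rfl | hv
      · exact hymem
      · rw [Finset.mem_singleton.mp hv]
        exact Finset.mem_compl.mpr hznotT
    have hcard2 : ({y, z} : Finset (Fin n)).card = 2 := Finset.card_pair (Ne.symm hzne)
    have heq : ({y, z} : Finset (Fin n)) = (T y)ᶜ :=
      Finset.eq_of_subset_of_card_le hsub (by rw [hcc, hcard2])
    have hu' : u ∈ (T y)ᶜ := Finset.mem_compl.mpr hu
    rw [← heq] at hu'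
    simpa using hu'
  choose z hzne hznotT hzspec using hcompl
  -- a bad set `B` inside `β`
  obtain ⟨b, hb, hble⟩ := exists_basis_le (C := C) ⟨n, π⟩ hβC
  obtain ⟨f₀, hf₀, hof₀⟩ := hble
  have hBcard : (Finset.image f₀ Finset.univ).card = b.1 := image_card hf₀
  have hBnotC : (⟨(Finset.image f₀ Finset.univ).card,
      subPerm π (Finset.image f₀ Finset.univ)⟩ : Permutation) ∉ C := by
    rw [subPerm_image_mem_iff hC hf₀ hof₀, Sigma.eta]
    exact hb.1
  set B := Finset.image f₀ Finset.univ with hBdef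
  -- pigeonhole setup
  have hmaps : ∀ y ∈ Bᶜ, z y ∈ B := by
    intro y hy
    have hyB : y ∉ B := Finset.mem_compl.mp hy
    obtain ⟨w, hwB, hwT⟩ := Finset.not_subset.mp (factF B hBnotC y)
    rcases hzspec y w hwT with rfl | rfl
    · exact absurd hwB hyB
    · exact hwB
  have hbm : b.1 ≤ m := hm b hb
  have hcard_lt : B.card * m < Bᶜ.card := by
    rw [Finset.card_compl, Fintype.card_fin]
    have h1 : B.card ≤ m := hBcard ▸ hbm
    have h2 : B.card * m ≤ m * m := Nat.mul_le_mul_right m h1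
    have h3 : m * m + m < n := by
      have : m * (m + 1) = m * m + m := by ring
      rw [← this]; exact hn
    have h4 : m * m < n - m := Nat.lt_sub_of_add_lt h3
    have h5 : n - m ≤ n - B.card := Nat.sub_le_sub_left h1 n
    exact lt_of_le_of_lt h2 (lt_of_lt_of_le h4 h5)
  obtain ⟨z₀, hz₀B, hz₀fiber⟩ :=
    Finset.exists_lt_card_fiber_of_mul_lt_card_of_maps_to hmaps hcard_lt
  -- a bad set `B'` avoiding `z₀`
  obtain ⟨b', hb', hb'le⟩ := exists_basis_le (C := C) _ (hDnotC z₀)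
  obtain ⟨f₁, hf₁, hof₁⟩ := hb'le
  have hg₁mono : StrictMono
      (fun i => ({z₀}ᶜ : Finset (Fin n)).orderEmbOfFin rfl (f₁ i)) :=
    (({z₀}ᶜ : Finset (Fin n)).orderEmbOfFin rfl).strictMono.comp hf₁
  have hg₁order : ∀ i j, b'.2 i < b'.2 j ↔
      π (({z₀}ᶜ : Finset (Fin n)).orderEmbOfFin rfl (f₁ i)) <
      π (({z₀}ᶜ : Finset (Fin n)).orderEmbOfFin rfl (f₁ j)) :=
    fun i j => (hof₁ i j).trans (subPerm_lt_iff π _ _ _)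
  set B' := Finset.image (fun i => ({z₀}ᶜ : Finset (Fin n)).orderEmbOfFin rfl (f₁ i))
    Finset.univ with hB'def
  have hB'card : B'.card = b'.1 := image_card hg₁mono
  have hz₀notB' : z₀ ∉ B' := by
    intro hz₀'
    obtain ⟨i, _, hi⟩ := Finset.mem_image.mp hz₀'
    have hmem : ({z₀}ᶜ : Finset (Fin n)).orderEmbOfFin rfl (f₁ i) ∈
        ({z₀}ᶜ : Finset (Fin n)) := Finset.orderEmbOfFin_mem _ _ _
    rw [hi] at hmem
    simp at hmem
  have hB'notC : (⟨B'.card, subPerm π B'⟩ : Permutation) ∉ C := by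
    rw [hB'def, subPerm_image_mem_iff hC hg₁mono hg₁order, Sigma.eta]
    exact hb'.1
  -- the fiber over `z₀` is contained in `B'`
  refine absurd hz₀fiber (not_lt.mpr ?_)
  refine le_trans (Finset.card_le_card (fun y hy => ?_))
    (le_trans (le_of_eq hB'card) (hm b' hb'))
  obtain ⟨hyBc, hyz⟩ := Finset.mem_filter.mp hy
  obtain ⟨u, huB', huT⟩ := Finset.not_subset.mp (factF B' hB'notC y)
  rcases hzspec y u huT with rfl | h
  · exact huB'
  · rw [h, hyz] at huB'
    exact absurd huB' hz₀notB'

/-- If `C` is finitely based with longest basis element of length `m`, then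
`C⁺¹` is finitely based with no basis element of length more than `m(m+1)`. -/
theorem stmt_15 (C : Set Permutation) (hC : IsPermClass C) (m : ℕ)
    (hfin : {β : Permutation | IsBasisElt C β}.Finite)
    (hm : ∀ β : Permutation, IsBasisElt C β → β.1 ≤ m) :
    {β : Permutation | IsBasisElt (OnePtExt C) β}.Finite ∧
      ∀ β : Permutation, IsBasisElt (OnePtExt C) β → β.1 ≤ m * (m + 1) := by
  have hbound := basis_len_le C hC m hm
  exact ⟨(finite_len_le (m * (m + 1))).subset (fun β hβ => hbound β hβ), hbound⟩
end

section
/- A well-founded quasi-order (X, ≤) is a well-quasi-order if and only if it does not contain a minimal bad sequence; equivalently, if X contains a bad sequence then it contains a minimal bad sequence. -/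
variable {X : Type*}

/-- A bad sequence: one with no good pair. -/
def IsBadSeq (r : X → X → Prop) (f : ℕ → X) : Prop :=
  ∀ i j : ℕ, i < j → ¬ r (f i) (f j)

/-- A minimal bad sequence: a bad sequence in which no term can be replaced by
a strictly smaller element (keeping the earlier terms) so that the resulting
sequence is still bad. -/
def IsMinBadSeq (r : X → X → Prop) (f : ℕ → X) : Prop :=
  IsBadSeq r f ∧
    ∀ i : ℕ, ¬ ∃ g : ℕ → X, (∀ k : ℕ, k < i → g k = f k) ∧
      (r (g i) (f i) ∧ ¬ r (f i) (g i)) ∧ IsBadSeq r g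

/-- Well-foundedness of a quasi-order: every nonempty subset contains a
minimal element. -/
def WFQO (r : X → X → Prop) : Prop :=
  ∀ S : Set X, S.Nonempty → ∃ x ∈ S, ∀ y ∈ S, ¬ (r y x ∧ ¬ r x y)

/-- The set of candidate values at stage `n` given earlier values `p`. -/
def candSet (r : X → X → Prop) (n : ℕ) (p : ℕ → X) : Set X :=
  {x | ∃ g : ℕ → X, IsBadSeq r g ∧ (∀ k, k < n → g k = p k) ∧ g n = x}

open Classical in
/-- Recursive construction of a minimal bad sequence. -/
noncomputable def minSeq (r : X → X → Prop) (x₀ : X) : ℕ → X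
  | n =>
    if h : ∃ x ∈ candSet r n (fun k => if hk : k < n then minSeq r x₀ k else x₀),
        ∀ y ∈ candSet r n (fun k => if hk : k < n then minSeq r x₀ k else x₀),
          ¬ (r y x ∧ ¬ r x y) then h.choose else x₀
  decreasing_by all_goals exact hk

lemma candSet_mem_iff (r : X → X → Prop) (x₀ : X) (n : ℕ) (x : X) :
    x ∈ candSet r n (fun k => if _ : k < n then minSeq r x₀ k else x₀)
      ↔ x ∈ candSet r n (minSeq r x₀) := by
  constructor <;> rintro ⟨g, hg, hag, hgn⟩ <;>
    exact ⟨g, hg, fun k hk => by have := hag k hk; simpa [hk] using this, hgn⟩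

lemma minSeq_spec (r : X → X → Prop) (hwf : WFQO r) (x₀ : X)
    (f₀ : ℕ → X) (hf₀ : IsBadSeq r f₀) (n : ℕ) :
    minSeq r x₀ n ∈ candSet r n (minSeq r x₀) ∧
      ∀ y ∈ candSet r n (minSeq r x₀), ¬ (r y (minSeq r x₀ n) ∧ ¬ r (minSeq r x₀ n) y) := by
  induction n using Nat.strong_induction_on with
  | _ n ih =>
    have hne : (candSet r n (minSeq r x₀)).Nonempty := by
      cases n with
      | zero => exact ⟨f₀ 0, f₀, hf₀, fun k hk => absurd hk (Nat.not_lt_zero k), rfl⟩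
      | succ m =>
        obtain ⟨⟨g, hg, hag, hgm⟩, -⟩ := ih m (Nat.lt_succ_self m)
        refine ⟨g (m + 1), g, hg, fun k hk => ?_, rfl⟩
        rcases Nat.lt_succ_iff_lt_or_eq.mp hk with h | h
        · exact hag k h
        · subst h; exact hgm
    have h : ∃ x ∈ candSet r n (fun k => if _ : k < n then minSeq r x₀ k else x₀),
        ∀ y ∈ candSet r n (fun k => if _ : k < n then minSeq r x₀ k else x₀),
          ¬ (r y x ∧ ¬ r x y) := by
      obtain ⟨x, hx, hmin⟩ := hwf _ hne
      exact ⟨x, (candSet_mem_iff r x₀ n x).mpr hx,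
        fun y hy => hmin y ((candSet_mem_iff r x₀ n y).mp hy)⟩
    have heq : minSeq r x₀ n = h.choose := by
      rw [minSeq]; simp only [dif_pos h]
    obtain ⟨hmem, hmin⟩ := h.choose_spec
    rw [heq]
    exact ⟨(candSet_mem_iff r x₀ n _).mp hmem,
      fun y hy => hmin y ((candSet_mem_iff r x₀ n y).mpr hy)⟩

lemma exists_minBadSeq (r : X → X → Prop) (hwf : WFQO r)
    (f₀ : ℕ → X) (hf₀ : IsBadSeq r f₀) : ∃ f : ℕ → X, IsMinBadSeq r f := by
  set f := minSeq r (f₀ 0) with hf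
  have spec := minSeq_spec r hwf (f₀ 0) f₀ hf₀
  refine ⟨f, ?_, ?_⟩
  · intro i j hij hr
    obtain ⟨⟨g, hg, hag, hgj⟩, -⟩ := spec j
    exact hg i j hij (by rw [hag i hij, hgj]; exact hr)
  · rintro i ⟨g, hag, hlt, hg⟩
    exact (spec i).2 (g i) ⟨g, hg, hag, rfl⟩ hlt

/-- A well-founded quasi-order is wqo iff it contains no minimal bad sequence. -/
theorem stmt_17 (r : X → X → Prop)
    (hrefl : Reflexive r) (htrans : Transitive r) (hwf : WFQO r) :
    (∀ f : ℕ → X, ∃ i j : ℕ, i < j ∧ r (f i) (f j)) ↔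
      ¬ ∃ f : ℕ → X, IsMinBadSeq r f := by
  constructor
  · rintro h ⟨f, hf, -⟩
    obtain ⟨i, j, hij, hr⟩ := h f
    exact hf i j hij hr
  · intro h f
    by_contra hc
    push_neg at hc
    exact h (exists_minBadSeq r hwf f (fun i j hij => hc i j hij))
end

section
/- If (X, ≤) is a well-founded quasi-order and S = {x_1, x_2, ...} is a minimal bad sequence from X, then the proper closure S^< = {y : y < x for some x ∈ S} is well-quasi-ordered. -/
variable {X : Type*}

/-- The proper closure of a minimal bad sequence is wqo. -/
theorem stmt_18 (r : X → X → Prop)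
    (hrefl : Reflexive r) (htrans : Transitive r) (hwf : WFQO r)
    (x : ℕ → X) (hmin : IsMinBadSeq r x) :
    ∀ f : ℕ → X, (∀ n : ℕ, ∃ m : ℕ, r (f n) (x m) ∧ ¬ r (x m) (f n)) →
      ∃ i j : ℕ, i < j ∧ r (f i) (f j) := by
  intro f hf
  by_contra hgood
  push_neg at hgood
  have hfbad : IsBadSeq r f := fun i j hij => hgood i j hij
  choose m hm1 hm2 using hf
  -- pick n₀ minimizing m n₀
  obtain ⟨v, ⟨n₀, hn₀⟩, hvmin⟩ := Nat.lt_wfRel.wf.has_min (Set.range m) ⟨m 0, 0, rfl⟩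
  have hk : ∀ n, v ≤ m n := fun n => Nat.le_of_not_lt (hvmin (m n) ⟨n, rfl⟩)
  set k := v with hkdef
  set g : ℕ → X := fun i => if i < k then x i else f (n₀ + (i - k)) with hg
  have hgk : g k = f n₀ := by simp [hg]
  have hglt : ∀ l, l < k → g l = x l := by intro l hl; simp [hg, hl]
  have hgbad : IsBadSeq r g := by
    intro i j hij hr
    by_cases hi : i < k
    · by_cases hj : j < k
      · rw [hglt i hi, hglt j hj] at hr
        exact hmin.1 i j hij hr
      · rw [hglt i hi] at hr
        simp only [hg, hj, if_neg] at hr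
        have h2 := hm1 (n₀ + (j - k))
        have : r (x i) (x (m (n₀ + (j - k)))) := htrans hr h2
        have hlt : i < m (n₀ + (j - k)) := lt_of_lt_of_le hi (hk _)
        exact hmin.1 _ _ hlt this
    · have hj : ¬ j < k := fun h => hi (hij.trans h)
      simp only [hg, hi, hj, if_neg] at hr
      have : n₀ + (i - k) < n₀ + (j - k) := by omega
      exact hfbad _ _ this hr
  apply hmin.2 k
  refine ⟨g, hglt, ⟨?_, ?_⟩, hgbad⟩
  · rw [hgk, ← hn₀]; exact hm1 n₀
  · rw [hgk, ← hn₀]; exact hm2 n₀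
end

section
/- Higman's lemma: if (X, ≤) is a well-quasi-order, then the set X* of finite words over X is well-quasi-ordered under the generalised subword order, where v_1...v_k ≤ w_1...w_n if there exist indices i_1 < ... < i_k with v_j ≤ w_{i_j} for all j. -/
/-- Higman's lemma: if `(X, r)` is wqo, then finite words over `X` are wqo
under the generalised subword order. -/
theorem stmt_19 {X : Type*} (r : X → X → Prop)
    (hrefl : Reflexive r) (htrans : Transitive r)
    (hwqo : ∀ f : ℕ → X, ∃ i j : ℕ, i < j ∧ r (f i) (f j)) :
    ∀ f : ℕ → List X, ∃ i j : ℕ, i < j ∧ List.SublistForall₂ r (f i) (f j) := by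
  letI : Std.Refl r := ⟨hrefl⟩
  letI : IsTrans X r := ⟨htrans⟩
  letI : IsPreorder X r := { refl := hrefl, trans := htrans }
  have hs : (Set.univ : Set X).PartiallyWellOrderedOn r := by
    intro f
    obtain ⟨i, j, hij, hr⟩ := hwqo (fun n => (f n).1)
    exact ⟨i, j, hij, hr⟩
  have h := Set.PartiallyWellOrderedOn.partiallyWellOrderedOn_sublistForall₂ r hs
  intro f
  obtain ⟨i, j, hij, hr⟩ := h.exists_lt (f := f) (fun n => by simp)
  exact ⟨i, j, hij, hr⟩
end
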